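/- Let x, y ∈ ℂ^r. Then the infimum of ‖Δ₁‖_F² + ‖Δ₂‖_F² over pairs Δ₁, Δ₂ ∈ ℂ^{r×r} with Δ₁ skew-Hermitian, Δ₂ negative semidefinite Hermitian, and (Δ₁ − Δ₂)x = y, equals the infimum of ‖Δ‖_F² over all Δ ∈ ℂ^{r×r} with Δ + Δ* positive semidefinite and Δx = y. -/

import Mathlib

open Matrix
open scoped ComplexOrder

/-- Squared Frobenius norm of a complex matrix. -/
noncomputable def frobSq {r q : ℕ} (A : Matrix (Fin r) (Fin q) ℂ) : ℝ :=
  ∑ i, ∑ j, ‖A i j‖ ^ 2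

lemma frobSq_neg {r : ℕ} (A : Matrix (Fin r) (Fin r) ℂ) : frobSq (-A) = frobSq A := by
  simp [frobSq]

lemma frobSq_add_of_skew_herm {r : ℕ} (S H : Matrix (Fin r) (Fin r) ℂ)
    (hS : Sᴴ = -S) (hH : Hᴴ = H) :
    frobSq (S + H) = frobSq S + frobSq H := by
  have hS' : ∀ i j, (starRingEnd ℂ) (S i j) = -(S j i) := by
    intro i j
    have := congrFun (congrFun hS j) i
    simpa [conjTranspose_apply] using this
  have hH' : ∀ i j, (starRingEnd ℂ) (H i j) = H j i := by
    intro i j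
    have := congrFun (congrFun hH j) i
    simpa [conjTranspose_apply] using this
  have key : ∑ i, ∑ j, (S i j * (starRingEnd ℂ) (H i j)).re = 0 := by
    have : ∑ i, ∑ j, (S i j * (starRingEnd ℂ) (H i j)).re
        = -∑ i, ∑ j, (S i j * (starRingEnd ℂ) (H i j)).re := by
      conv_lhs => rw [Finset.sum_comm]
      rw [← Finset.sum_neg_distrib]
      congr 1; ext i
      rw [← Finset.sum_neg_distrib]
      congr 1; ext j
      have : S j i * (starRingEnd ℂ) (H j i)
          = -(starRingEnd ℂ) (S i j * (starRingEnd ℂ) (H i j)) := by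
        rw [_root_.map_mul, Complex.conj_conj, hS' i j, hH' j i]
        ring
      rw [this]
      simp
    linarith
  have expand : ∀ i j, ‖S i j + H i j‖ ^ 2
      = ‖S i j‖ ^ 2 + ‖H i j‖ ^ 2 + 2 * (S i j * (starRingEnd ℂ) (H i j)).re := by
    intro i j
    have h1 : ∀ z : ℂ, ‖z‖ ^ 2 = z.re ^ 2 + z.im ^ 2 := by
      intro z
      rw [← Complex.normSq_eq_norm_sq]
      simp [Complex.normSq_apply]; ring
    simp only [h1, Complex.add_re, Complex.add_im, Complex.mul_re, Complex.conj_re,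
      Complex.conj_im]
    ring
  simp only [frobSq, Matrix.add_apply, expand]
  rw [← Finset.sum_add_distrib]
  simp only [Finset.sum_add_distrib, ← Finset.mul_sum]
  rw [key]
  ring

theorem inf_skewHerm_negSemidef_eq_inf_dissipative
    {r : ℕ} (x y : Fin r → ℂ) :
    sInf {t : ℝ | ∃ Δ₁ Δ₂ : Matrix (Fin r) (Fin r) ℂ,
        Δ₁ᴴ = -Δ₁ ∧ (-Δ₂).PosSemidef ∧ (Δ₁ - Δ₂) *ᵥ x = y ∧
        t = frobSq Δ₁ + frobSq Δ₂}
      =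
    sInf {t : ℝ | ∃ Δ : Matrix (Fin r) (Fin r) ℂ,
        (Δ + Δᴴ).PosSemidef ∧ Δ *ᵥ x = y ∧ t = frobSq Δ} := by
  congr 1
  ext t
  constructor
  · rintro ⟨Δ₁, Δ₂, h1, h2, h3, h4⟩
    refine ⟨Δ₁ - Δ₂, ?_, h3, ?_⟩
    · have hΔ₂herm : Δ₂ᴴ = Δ₂ := by
        have := h2.isHermitian
        rw [IsHermitian] at this
        have : (-Δ₂)ᴴ = -Δ₂ := this
        simpa using this
      have : Δ₁ - Δ₂ + (Δ₁ - Δ₂)ᴴ = -Δ₂ + -Δ₂ := by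
        rw [conjTranspose_sub, h1, hΔ₂herm]
        abel
      rw [this]
      exact h2.add h2
    · have hΔ₂herm : Δ₂ᴴ = Δ₂ := by
        have := h2.isHermitian
        rw [IsHermitian] at this
        have : (-Δ₂)ᴴ = -Δ₂ := this
        simpa using this
      have : Δ₁ - Δ₂ = Δ₁ + (-Δ₂) := by abel
      rw [h4, this, frobSq_add_of_skew_herm Δ₁ (-Δ₂) h1 (by rw [conjTranspose_neg, hΔ₂herm]),
        frobSq_neg]
  · rintro ⟨Δ, h1, h2, h3⟩
    refine ⟨(1/2 : ℂ) • (Δ - Δᴴ), -((1/2 : ℂ) • (Δ + Δᴴ)), ?_, ?_, ?_, ?_⟩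
    · rw [conjTranspose_smul, conjTranspose_sub, conjTranspose_conjTranspose]
      rw [show (star ((1:ℂ)/2)) = (1/2 : ℂ) by simp, ← smul_neg]
      congr 1
      abel
    · rw [neg_neg]
      constructor
      · rw [IsHermitian, conjTranspose_smul, conjTranspose_add, conjTranspose_conjTranspose]
        rw [show (star ((1:ℂ)/2)) = (1/2 : ℂ) by simp]
        congr 1
        abel
      · intro v
        have := h1.2 v
        have h12 : (0:ℂ) ≤ (1/2 : ℂ) := by
          rw [Complex.le_def]
          norm_num
        exact (h1.smul h12).2 v
    · have : (1/2 : ℂ) • (Δ - Δᴴ) - -((1/2 : ℂ) • (Δ + Δᴴ)) = Δ := by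
        rw [sub_neg_eq_add, ← smul_add]
        have : Δ - Δᴴ + (Δ + Δᴴ) = (2:ℂ) • Δ := by
          rw [two_smul]; abel
        rw [this, smul_smul]
        norm_num
      rw [this, h2]
    · have hH : ((1/2 : ℂ) • (Δ + Δᴴ))ᴴ = (1/2 : ℂ) • (Δ + Δᴴ) := by
        rw [conjTranspose_smul, conjTranspose_add, conjTranspose_conjTranspose]
        rw [show (star ((1:ℂ)/2)) = (1/2 : ℂ) by simp]
        congr 1
        abel
      have hSk : ((1/2 : ℂ) • (Δ - Δᴴ))ᴴ = -((1/2 : ℂ) • (Δ - Δᴴ)) := by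
        rw [conjTranspose_smul, conjTranspose_sub, conjTranspose_conjTranspose]
        rw [show (star ((1:ℂ)/2)) = (1/2 : ℂ) by simp, ← smul_neg]
        congr 1
        abel
      have hsum : (1/2 : ℂ) • (Δ - Δᴴ) + (1/2 : ℂ) • (Δ + Δᴴ) = Δ := by
        rw [← smul_add]
        have : Δ - Δᴴ + (Δ + Δᴴ) = (2:ℂ) • Δ := by
          rw [two_smul]; abel
        rw [this, smul_smul]
        norm_num
      rw [h3, frobSq_neg, ← frobSq_add_of_skew_herm _ _ hSk hH, hsum]
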